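/- For a central configuration of two nested regular tetrahedra with edge ratio t ∈ (0,1) and equal masses μ_1 on the outer and μ_2 on the inner tetrahedron, there exists δ ∈ (0,1) such that μ_1 and μ_2 have the same sign for t ∈ (0,δ) and opposite signs for t ∈ (δ,1). In particular a central configuration with positive masses is impossible when the tetrahedra are too close (t near 1). -/

import Mathlib

/-- Euclidean norm of a vector in `ℝ^n`. -/
noncomputable def enorm' {n : ℕ} (v : Fin n → ℝ) : ℝ := Real.sqrt (∑ i, v i ^ 2)

/-- A configuration `q` with masses `m` is a central configuration: for some `c > 0`,
`∑_{j ≠ i} m_j (1/|q_j - q_i|³ - c)(q_j - q_i) = 0` for every `i`. -/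
def IsCentralConfig {N n : ℕ} (q : Fin N → Fin n → ℝ) (m : Fin N → ℝ) : Prop :=
  ∃ c : ℝ, 0 < c ∧ ∀ i, ∑ j ∈ Finset.univ.filter (fun j => j ≠ i),
    m j • (((enorm' (q j - q i)) ^ 3)⁻¹ - c) • (q j - q i) = 0

/-- Vertices of the outer regular tetrahedron. -/
def tetraVertices : Fin 4 → Fin 3 → ℝ :=
  ![![1, 1, 1], ![-1, -1, 1], ![-1, 1, -1], ![1, -1, -1]]

/-- Positions of two nested regular tetrahedra with edge ratio `t`:
the outer vertices `q_j` followed by the inner vertices `t·q_j`. -/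
noncomputable def nestedTetra (t : ℝ) : Fin 8 → Fin 3 → ℝ := fun i =>
  if h : (i : ℕ) < 4 then tetraVertices ⟨i, h⟩
  else t • tetraVertices ⟨(i : ℕ) - 4, by have := i.isLt; omega⟩

/-- Masses: `μ₁` on each outer vertex, `μ₂` on each inner vertex. -/
noncomputable def nestedTetraMass (μ1 μ2 : ℝ) : Fin 8 → ℝ := fun i =>
  if (i : ℕ) < 4 then μ1 else μ2

noncomputable def Pv (t : ℝ) : ℝ :=
  (1-t)/(Real.sqrt 3*(1-t))^3 - (1+3*t)/(Real.sqrt (3*t^2+2*t+3))^3 + 4*t/(Real.sqrt 8)^3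
noncomputable def Qv (t : ℝ) : ℝ :=
  t*(1-t)/(Real.sqrt 3*(1-t))^3 + t*(t+3)/(Real.sqrt (3*t^2+2*t+3))^3
    - 4*t/(t^3*(Real.sqrt 8)^3)
noncomputable def Rfun (t : ℝ) : ℝ :=
  t^3/((Real.sqrt 3)^3*(1-t)^2) + t^3*(t+3)/(Real.sqrt (3*t^2+2*t+3))^3
    - 4/(Real.sqrt 8)^3
noncomputable def Ffun (t : ℝ) : ℝ := t^6*(t+3)^2 / (3*t^2+2*t+3)^3

lemma hpos (t : ℝ) : 0 < 3*t^2+2*t+3 := by nlinarith [sq_nonneg (t+1), sq_nonneg t]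

lemma sv_pos (t : ℝ) : 0 < Real.sqrt (3*t^2+2*t+3) := Real.sqrt_pos.mpr (hpos t)

lemma s3_pos : 0 < Real.sqrt 3 := Real.sqrt_pos.mpr (by norm_num)

lemma s8_pos : 0 < Real.sqrt 8 := Real.sqrt_pos.mpr (by norm_num)

lemma Ffun_hasDeriv (t : ℝ) : HasDerivAt Ffun
    ((2*t^5*(t+3)*(3*t^3+5*t^2+21*t+27)) / (3*t^2+2*t+3)^4) t := by
  have hne : (3*t^2+2*t+3)^3 ≠ 0 := (pow_pos (hpos t) 3).ne'
  have h1 : HasDerivAt (fun t : ℝ => t^6*(t+3)^2) (6*t^5*(t+3)^2 + t^6*(2*(t+3))) t := by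
    have := ((hasDerivAt_pow 6 t).mul (((hasDerivAt_id t).add_const 3).pow 2))
    refine this.congr_deriv ?_
    simp [id]
  have h2 : HasDerivAt (fun t : ℝ => (3*t^2+2*t+3)^3) (3*(3*t^2+2*t+3)^2*(6*t+2)) t := by
    have hin : HasDerivAt (fun t : ℝ => 3*t^2+2*t+3) (6*t+2) t := by
      have := (((hasDerivAt_pow 2 t).const_mul 3).add ((hasDerivAt_id t).const_mul 2)).add_const 3
      refine this.congr_deriv ?_
      simp [id]
      ring
    have := hin.pow 3
    refine this.congr_deriv ?_
    norm_num
  have hd := h1.div h2 hne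
  refine hd.congr_deriv ?_
  rw [div_eq_div_iff (by positivity) (pow_pos (hpos t) 4).ne']
  ring

lemma Ffun_mono : StrictMonoOn Ffun (Set.Icc (0:ℝ) 1) := by
  apply strictMonoOn_of_deriv_pos (convex_Icc 0 1)
  · exact fun x _ => ((Ffun_hasDeriv x).differentiableAt).continuousAt.continuousWithinAt
  · intro x hx
    rw [interior_Icc] at hx
    rw [(Ffun_hasDeriv x).deriv]
    have h1 : 0 < x := hx.1
    have h2 := hpos x
    positivity

lemma f2_sq (x : ℝ) : (x^3*(x+3)/(Real.sqrt (3*x^2+2*x+3))^3)^2 = Ffun x := by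
  rw [div_pow, show (Real.sqrt (3*x^2+2*x+3)^3)^2 = (Real.sqrt (3*x^2+2*x+3)^2)^3 by ring,
    Real.sq_sqrt (hpos x).le, Ffun]
  ring_nf

lemma Rfun_mono {a b : ℝ} (ha : 0 < a) (hab : a < b) (hb : b < 1) : Rfun a < Rfun b := by
  have hb0 : 0 < b := ha.trans hab
  have h1a : (0:ℝ) < 1 - a := by linarith
  have h1b : (0:ℝ) < 1 - b := by linarith
  have hs3 := s3_pos
  -- first term strictly increases
  have hT1 : a^3/((Real.sqrt 3)^3*(1-a)^2) < b^3/((Real.sqrt 3)^3*(1-b)^2) := by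
    rw [div_lt_div_iff₀ (by positivity) (by positivity)]
    have h2 : (1-b)^2 < (1-a)^2 := by nlinarith
    have h3 : a^3 < b^3 := by nlinarith [sq_nonneg a, sq_nonneg b, sq_nonneg (a+b), mul_pos ha hb0]
    have hpoly : a^3*(1-b)^2 < b^3*(1-a)^2 := by
      nlinarith [mul_lt_mul_of_pos_left h2 (pow_pos ha 3),
        mul_lt_mul_of_pos_right h3 (by positivity : (0:ℝ) < (1-a)^2)]
    nlinarith [pow_pos hs3 3, mul_lt_mul_of_pos_left hpoly (pow_pos hs3 3)]
  -- second term strictly increases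
  have hF : Ffun a < Ffun b :=
    Ffun_mono ⟨ha.le, by linarith⟩ ⟨hb0.le, hb.le⟩ hab
  have hfb : 0 ≤ b^3*(b+3)/(Real.sqrt (3*b^2+2*b+3))^3 := by
    apply div_nonneg (by nlinarith [mul_pos (pow_pos hb0 3) (by linarith : (0:ℝ) < b+3)]) (by positivity)
  have hT2 : a^3*(a+3)/(Real.sqrt (3*a^2+2*a+3))^3 < b^3*(b+3)/(Real.sqrt (3*b^2+2*b+3))^3 := by
    apply lt_of_pow_lt_pow_left₀ 2 hfb
    rw [f2_sq, f2_sq]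
    exact hF
  unfold Rfun
  linarith

lemma Pv_pos {t : ℝ} (ht0 : 0 < t) (ht1 : t < 1) : 0 < Pv t := by
  have h1t : (0:ℝ) < 1 - t := by linarith
  have hs3 := s3_pos
  have hsv := sv_pos t
  have hs8 := s8_pos
  have hkey : (1+3*t)/(Real.sqrt (3*t^2+2*t+3))^3 < (1-t)/(Real.sqrt 3*(1-t))^3 := by
    rw [div_lt_div_iff₀ (by positivity) (by positivity)]
    -- (1+3t)·(√3(1-t))³ < (1-t)·sv³
    have hL : 0 ≤ (1+3*t)*(Real.sqrt 3*(1-t))^3 := by positivity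
    have hsq : ((1+3*t)*(Real.sqrt 3*(1-t))^3)^2 < ((1-t)*(Real.sqrt (3*t^2+2*t+3))^3)^2 := by
      have e1 : ((1+3*t)*(Real.sqrt 3*(1-t))^3)^2 = (Real.sqrt 3^2)^3*(1+3*t)^2*(1-t)^6 := by ring
      have e2 : ((1-t)*(Real.sqrt (3*t^2+2*t+3))^3)^2
          = (1-t)^2*(Real.sqrt (3*t^2+2*t+3)^2)^3 := by ring
      rw [e1, e2, Real.sq_sqrt (by norm_num : (0:ℝ) ≤ 3), Real.sq_sqrt (hpos t).le]
      have hg : 0 < 360+224*t-720*t^2+864*t^3-216*t^4 := by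
        nlinarith [mul_nonneg ht0.le (sq_nonneg (t - 3/4)),
          mul_nonneg (pow_nonneg ht0.le 3) h1t.le, sq_nonneg (t-1), ht0]
      have hD : (3*t^2+2*t+3)^3 - 27*(1+3*t)^2*(1-t)^4
          = t^2*(360+224*t-720*t^2+864*t^3-216*t^4) := by ring
      have h4 : 27*(1+3*t)^2*(1-t)^4 < (3*t^2+2*t+3)^3 := by
        nlinarith [mul_pos (pow_pos ht0 2) hg]
      nlinarith [mul_lt_mul_of_pos_left h4 (by positivity : (0:ℝ) < (1-t)^2)]
    exact lt_of_pow_lt_pow_left₀ 2 (by positivity) hsq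
  have hlast : 0 < 4*t/(Real.sqrt 8)^3 := by positivity
  unfold Pv
  linarith

lemma Qv_Rfun {t : ℝ} (ht0 : 0 < t) (ht1 : t < 1) : t^2 * Qv t = Rfun t := by
  have h1t : (1:ℝ) - t ≠ 0 := by linarith
  have hs3 := s3_pos.ne'
  have hsv := (sv_pos t).ne'
  have hs8 := s8_pos.ne'
  unfold Qv Rfun
  field_simp

lemma sqrt3_lb : (1.73:ℝ) < Real.sqrt 3 := by
  rw [show (1.73:ℝ) = Real.sqrt (1.73^2) by rw [Real.sqrt_sq]; norm_num]
  exact Real.sqrt_lt_sqrt (by norm_num) (by norm_num)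

lemma sqrt3_ub : Real.sqrt 3 < 1.7321 := by
  rw [show (1.7321:ℝ) = Real.sqrt (1.7321^2) by rw [Real.sqrt_sq]; norm_num]
  exact Real.sqrt_lt_sqrt (by norm_num) (by norm_num)

lemma sqrt8_lb : (2.8284:ℝ) < Real.sqrt 8 := by
  rw [show (2.8284:ℝ) = Real.sqrt (2.8284^2) by rw [Real.sqrt_sq]; norm_num]
  exact Real.sqrt_lt_sqrt (by norm_num) (by norm_num)

lemma sqrt8_ub : Real.sqrt 8 < 2.8285 := by
  rw [show (2.8285:ℝ) = Real.sqrt (2.8285^2) by rw [Real.sqrt_sq]; norm_num]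
  exact Real.sqrt_lt_sqrt (by norm_num) (by norm_num)

lemma sqrt19q_lb : (2.17:ℝ) < Real.sqrt (19/4) := by
  rw [show (2.17:ℝ) = Real.sqrt (2.17^2) by rw [Real.sqrt_sq]; norm_num]
  exact Real.sqrt_lt_sqrt (by norm_num) (by norm_num)

lemma Rfun_half_neg : Rfun (1/2) < 0 := by
  have e : Rfun (1/2) = 1/(2*Real.sqrt 3^3) + (7/16)/(Real.sqrt (19/4))^3 - 4/(Real.sqrt 8)^3 := by
    have h := s3_pos.ne'
    unfold Rfun
    norm_num
    field_simp
    ring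
  rw [e]
  have hx := sqrt3_lb
  have hy := sqrt19q_lb
  have hz := sqrt8_ub
  have hx0 := s3_pos
  have hy0 : (0:ℝ) < Real.sqrt (19/4) := Real.sqrt_pos.mpr (by norm_num)
  have hz0 := s8_pos
  have hA : 1/(2*Real.sqrt 3^3) < 0.0966 := by
    rw [div_lt_iff₀ (by positivity)]
    nlinarith [pow_lt_pow_left₀ hx (by norm_num : (0:ℝ) ≤ 1.73) (by norm_num : 3 ≠ 0)]
  have hB : (7/16:ℝ)/(Real.sqrt (19/4))^3 < 0.0429 := by
    rw [div_lt_iff₀ (by positivity)]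
    nlinarith [pow_lt_pow_left₀ hy (by norm_num : (0:ℝ) ≤ 2.17) (by norm_num : 3 ≠ 0)]
  have hC : (0.1767:ℝ) < 4/(Real.sqrt 8)^3 := by
    rw [lt_div_iff₀ (by positivity)]
    nlinarith [pow_lt_pow_left₀ hz hz0.le (by norm_num : 3 ≠ 0)]
  linarith

lemma Rfun_nine_pos : 0 < Rfun (9/10) := by
  have e : Rfun (9/10) = (729/10)/(Real.sqrt 3^3) + (729/1000)*(39/10)/(Real.sqrt (723/100))^3
      - 4/(Real.sqrt 8)^3 := by
    have h := s3_pos.ne'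
    unfold Rfun
    norm_num
    field_simp
    ring
  rw [e]
  have hx := sqrt3_ub
  have hx0 := s3_pos
  have hz := sqrt8_lb
  have hz0 := s8_pos
  have hw0 : (0:ℝ) < Real.sqrt (723/100) := Real.sqrt_pos.mpr (by norm_num)
  have hA : (14:ℝ) < (729/10)/(Real.sqrt 3^3) := by
    rw [lt_div_iff₀ (by positivity)]
    nlinarith [pow_lt_pow_left₀ hx hx0.le (by norm_num : 3 ≠ 0)]
  have hB : (0:ℝ) < (729/1000)*(39/10)/(Real.sqrt (723/100))^3 := by positivity
  have hC : 4/(Real.sqrt 8)^3 < 0.177 := by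
    rw [div_lt_iff₀ (by positivity)]
    nlinarith [pow_lt_pow_left₀ hz (by norm_num : (0:ℝ) ≤ 2.8284) (by norm_num : 3 ≠ 0)]
  linarith

lemma Rfun_cont : ContinuousOn Rfun (Set.Icc (1/2:ℝ) (9/10)) := by
  apply ContinuousOn.sub
  apply ContinuousOn.add
  · apply ContinuousOn.div (by fun_prop)
    · fun_prop
    · intro x hx
      have : (1:ℝ) - x ≠ 0 := by
        have := hx.2
        simp only [Set.mem_Icc] at hx
        intro h
        nlinarith [hx.2]
      positivity
  · apply ContinuousOn.div (by fun_prop)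
    · apply Continuous.continuousOn
      apply Continuous.pow
      exact Real.continuous_sqrt.comp (by continuity)
    · intro x hx
      exact (pow_pos (sv_pos x) 3).ne'
  · fun_prop
lemma key_relation (t μ1 μ2 : ℝ) (ht0 : 0 < t) (ht1 : t < 1)
    (h : IsCentralConfig (nestedTetra t) (nestedTetraMass μ1 μ2)) :
    μ1 * Pv t + μ2 * Qv t = 0 := by
  obtain ⟨c, -, hsum⟩ := h
  have h0 := congrFun (hsum 0) 0
  have h4 := congrFun (hsum 4) 0
  rw [Finset.sum_apply] at h0 h4
  simp [Finset.sum_filter, Fin.sum_univ_eight, nestedTetra, tetraVertices, nestedTetraMass,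
    Fin.sum_univ_three, enorm', Matrix.vecHead, Matrix.vecTail, Function.comp,
    show ((0:Fin 8):ℕ) = 0 from rfl, show ((1:Fin 8):ℕ) = 1 from rfl,
    show ((2:Fin 8):ℕ) = 2 from rfl, show ((3:Fin 8):ℕ) = 3 from rfl,
    show ((4:Fin 8):ℕ) = 4 from rfl, show ((5:Fin 8):ℕ) = 5 from rfl,
    show ((6:Fin 8):ℕ) = 6 from rfl, show ((7:Fin 8):ℕ) = 7 from rfl] at h0 h4
  rw [show ((-1:ℝ)-1)^2+((-1)-1)^2 = 8 by norm_num,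
      show (t-1)^2+(t-1)^2+(t-1)^2 = 3*(1-t)^2 by ring,
      show (-t-1)^2+(-t-1)^2+(t-1)^2 = 3*t^2+2*t+3 by ring,
      show (-t-1)^2+(t-1)^2+(-t-1)^2 = 3*t^2+2*t+3 by ring,
      show (t-1)^2+(-t-1)^2+(-t-1)^2 = 3*t^2+2*t+3 by ring,
      Real.sqrt_mul (by norm_num : (0:ℝ) ≤ 3),
      Real.sqrt_sq (by linarith : (0:ℝ) ≤ 1-t)] at h0
  rw [show (1-t)^2+(1-t)^2+(1-t)^2 = 3*(1-t)^2 by ring,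
      show ((-1:ℝ)-t)^2+((-1)-t)^2+(1-t)^2 = 3*t^2+2*t+3 by ring,
      show ((-1:ℝ)-t)^2+(1-t)^2+((-1)-t)^2 = 3*t^2+2*t+3 by ring,
      show (1-t)^2+((-1:ℝ)-t)^2+((-1)-t)^2 = 3*t^2+2*t+3 by ring,
      show (-t-t)^2+(-t-t)^2 = 8*t^2 by ring,
      Real.sqrt_mul (by norm_num : (0:ℝ) ≤ 3),
      Real.sqrt_sq (by linarith : (0:ℝ) ≤ 1-t),
      Real.sqrt_mul (by norm_num : (0:ℝ) ≤ 8),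
      Real.sqrt_sq (le_of_lt ht0)] at h4
  simp only [Pv, Qv]
  linear_combination h4 - t * h0

/-- For central configurations of two nested regular tetrahedra (edge ratio `t`,
equal mass `μ₁` on the outer and `μ₂` on the inner tetrahedron), there is a
`δ ∈ (0,1)` such that the masses have the same sign for `t ∈ (0,δ)` and opposite
signs for `t ∈ (δ,1)`. -/
theorem stmt14 : ∃ δ : ℝ, 0 < δ ∧ δ < 1 ∧
    ∀ t μ1 μ2 : ℝ, 0 < t → t < 1 → μ1 ≠ 0 → μ2 ≠ 0 →
      IsCentralConfig (nestedTetra t) (nestedTetraMass μ1 μ2) →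
        ((t < δ → 0 < μ1 * μ2) ∧ (δ < t → μ1 * μ2 < 0)) := by
  have hsub := intermediate_value_Icc (by norm_num : (1/2:ℝ) ≤ 9/10) Rfun_cont
  have h0mem : (0:ℝ) ∈ Set.Icc (Rfun (1/2)) (Rfun (9/10)) :=
    ⟨Rfun_half_neg.le, Rfun_nine_pos.le⟩
  obtain ⟨δ, hδmem, hδ0⟩ := hsub h0mem
  have hδl : (1/2:ℝ) ≤ δ := hδmem.1
  have hδu : δ ≤ 9/10 := hδmem.2
  refine ⟨δ, by linarith, by linarith, ?_⟩
  intro t μ1 μ2 ht0 ht1 hμ1 hμ2 hcc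
  have hk := key_relation t μ1 μ2 ht0 ht1 hcc
  have hP := Pv_pos ht0 ht1
  have hQR := Qv_Rfun ht0 ht1
  have hμ2sq : 0 < μ2^2 := by rcases hμ2.lt_or_gt with h|h <;> nlinarith
  have hkm : μ1*μ2*Pv t + μ2^2*Qv t = 0 := by linear_combination μ2 * hk
  constructor
  · intro htδ
    have hR : Rfun t < 0 := by
      have := Rfun_mono ht0 htδ (by linarith)
      linarith [hδ0 ▸ this]
    have hQ : Qv t < 0 := by nlinarith [mul_pos ht0 ht0]
    have hprod : 0 < μ1*μ2*Pv t := by nlinarith [mul_neg_of_pos_of_neg hμ2sq hQ]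
    by_contra h
    push_neg at h
    nlinarith [mul_nonneg (neg_nonneg.mpr h) hP.le]
  · intro htδ
    have hR : 0 < Rfun t := by
      have := Rfun_mono (by linarith : (0:ℝ) < δ) htδ ht1
      linarith [hδ0 ▸ this]
    have hQ : 0 < Qv t := by nlinarith [mul_pos ht0 ht0]
    have hprod : μ1*μ2*Pv t < 0 := by nlinarith [mul_pos hμ2sq hQ]
    by_contra h
    push_neg at h
    nlinarith [mul_nonneg h hP.le]
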